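/- The set A = {0,1,2,4,5,6} does not tile the integers, although its polynomial A(x) = Φ_3(x)·Φ_8(x) satisfies (T1): A(1) = ∏_{s∈S_A} Φ_s(1). -/

import Mathlib

open Polynomial

/-- The polynomial `∑_{a ∈ A} x^a` of a finite set of nonnegative integers. -/
noncomputable def setPoly (A : Finset ℕ) : Polynomial ℤ :=
  ∑ a ∈ A, X ^ a

/-- A finite set of nonnegative integers tiles the integers. -/
def Tiles (A : Finset ℕ) : Prop :=
  ∃ C : Set ℤ, ∀ z : ℤ, ∃! p : ℕ × ℤ, p.1 ∈ A ∧ p.2 ∈ C ∧ (p.1 : ℤ) + p.2 = z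

lemma setPoly_eq : setPoly ({0, 1, 2, 4, 5, 6} : Finset ℕ)
    = 1 + X + X ^ 2 + X ^ 4 + X ^ 5 + X ^ 6 := by
  simp only [setPoly]
  rw [show ({0, 1, 2, 4, 5, 6} : Finset ℕ) = {0, 1, 2, 4, 5, 6} from rfl]
  rw [Finset.sum_insert (by decide), Finset.sum_insert (by decide),
    Finset.sum_insert (by decide), Finset.sum_insert (by decide),
    Finset.sum_insert (by decide), Finset.sum_singleton]
  ring

lemma cyclo_prod : setPoly ({0, 1, 2, 4, 5, 6} : Finset ℕ)
    = cyclotomic 3 ℤ * cyclotomic 8 ℤ := by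
  rw [setPoly_eq, cyclotomic_prime ℤ 3,
    show (8 : ℕ) = 2 ^ (2 + 1) from rfl,
    cyclotomic_prime_pow_eq_geom_sum (by norm_num : Nat.Prime 2)]
  simp [Finset.sum_range_succ]
  ring

lemma not_tiles : ¬ Tiles ({0, 1, 2, 4, 5, 6} : Finset ℕ) := by
  rintro ⟨C, hC⟩
  obtain ⟨⟨a0, c0⟩, ⟨ha0, hc0, hs0⟩, -⟩ := hC 0
  obtain ⟨⟨a', c'⟩, ⟨ha', hc', hs'⟩, -⟩ := hC (c0 + 3)
  simp only at hs' hc' ha'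
  -- helper to derive a contradiction from a double representation
  have collide : ∀ (w : ℤ) (a1 a2 : ℕ) (d1 d2 : ℤ),
      a1 ∈ ({0, 1, 2, 4, 5, 6} : Finset ℕ) → a2 ∈ ({0, 1, 2, 4, 5, 6} : Finset ℕ) →
      d1 ∈ C → d2 ∈ C → (a1 : ℤ) + d1 = w → (a2 : ℤ) + d2 = w → d1 ≠ d2 → False := by
    intro w a1 a2 d1 d2 m1 m2 k1 k2 e1 e2 hne
    obtain ⟨p, -, hu⟩ := hC w
    have h1 := hu (a1, d1) ⟨m1, k1, e1⟩
    have h2 := hu (a2, d2) ⟨m2, k2, e2⟩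
    exact hne (congrArg Prod.snd (h1.trans h2.symm))
  fin_cases ha' <;> simp only [Nat.cast_ofNat, Nat.cast_zero, Nat.cast_one] at hs'
  · -- a' = 0, c' = c0 + 3 : collision at c0 + 4
    exact collide (c0 + 4) 4 1 c0 c' (by decide) (by decide) hc0 hc'
      (by push_cast; omega) (by push_cast; omega) (by omega)
  · -- a' = 1, c' = c0 + 2 : collision at c0 + 2
    exact collide (c0 + 2) 2 0 c0 c' (by decide) (by decide) hc0 hc'
      (by push_cast; omega) (by push_cast; omega) (by omega)
  · -- a' = 2, c' = c0 + 1 : collision at c0 + 1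
    exact collide (c0 + 1) 1 0 c0 c' (by decide) (by decide) hc0 hc'
      (by push_cast; omega) (by push_cast; omega) (by omega)
  · -- a' = 4, c' = c0 - 1 : collision at c0
    exact collide c0 0 1 c0 c' (by decide) (by decide) hc0 hc'
      (by push_cast; omega) (by push_cast; omega) (by omega)
  · -- a' = 5, c' = c0 - 2 : collision at c0
    exact collide c0 0 2 c0 c' (by decide) (by decide) hc0 hc'
      (by push_cast; omega) (by push_cast; omega) (by omega)
  · -- a' = 6, c' = c0 - 3 : collision at c0 + 1
    exact collide (c0 + 1) 1 4 c0 c' (by decide) (by decide) hc0 hc'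
      (by push_cast; omega) (by push_cast; omega) (by omega)

theorem example_not_tiling_but_T1
    (S : Finset ℕ)
    (hS : ∀ s : ℕ, s ∈ S ↔
      (IsPrimePow s ∧ cyclotomic s ℤ ∣ setPoly ({0, 1, 2, 4, 5, 6} : Finset ℕ))) :
    ¬ Tiles ({0, 1, 2, 4, 5, 6} : Finset ℕ) ∧
    setPoly ({0, 1, 2, 4, 5, 6} : Finset ℕ) = cyclotomic 3 ℤ * cyclotomic 8 ℤ ∧
    ((({0, 1, 2, 4, 5, 6} : Finset ℕ).card : ℤ) =
      ∏ s ∈ S, (cyclotomic s ℤ).eval 1) := by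
  refine ⟨not_tiles, cyclo_prod, ?_⟩
  have hSeq : S = ({3, 8} : Finset ℕ) := by
    ext s
    rw [hS s, Finset.mem_insert, Finset.mem_singleton]
    constructor
    · rintro ⟨hpp, hdvd⟩
      have hpos : 0 < s := hpp.pos
      have hirr : Irreducible (cyclotomic s ℤ) := cyclotomic.irreducible hpos
      have hprime : Prime (cyclotomic s ℤ) := hirr.prime
      rw [cyclo_prod] at hdvd
      rcases hprime.dvd_or_dvd hdvd with h | h
      · left
        have := hirr.associated_of_dvd (cyclotomic.irreducible (by norm_num)) h
        exact cyclotomic_injective (eq_of_monic_of_associated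
          (cyclotomic.monic s ℤ) (cyclotomic.monic 3 ℤ) this)
      · right
        have := hirr.associated_of_dvd (cyclotomic.irreducible (by norm_num)) h
        exact cyclotomic_injective (eq_of_monic_of_associated
          (cyclotomic.monic s ℤ) (cyclotomic.monic 8 ℤ) this)
    · rintro (rfl | rfl)
      · exact ⟨⟨3, 1, Nat.prime_iff.mp (by norm_num), one_pos, by norm_num⟩, cyclo_prod ▸ Dvd.intro _ rfl⟩
      · exact ⟨⟨2, 3, Nat.prime_iff.mp (by norm_num), by norm_num, by norm_num⟩, cyclo_prod ▸ Dvd.intro_left _ rfl⟩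
  rw [hSeq]
  rw [Finset.prod_insert (by decide), Finset.prod_singleton]
  have h3 : (cyclotomic 3 ℤ).eval 1 = 3 := by
    have : Fact (Nat.Prime 3) := ⟨by norm_num⟩
    simpa using eval_one_cyclotomic_prime (R := ℤ) (p := 3)
  have h8 : (cyclotomic 8 ℤ).eval 1 = 2 := by
    have := eval_one_cyclotomic_prime_pow (R := ℤ) (p := 2) 2 (hn := ⟨by norm_num⟩)
    simpa using this
  rw [h3, h8]
  decide
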